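/- The y-version q-Stirling numbers of the second kind have ordinary generating function Σ_{n ≥ k} S_q(n,k,y) t^n = t^k / Π_{i=1}^k (1 - [i]_q t (1 - q^{-i} y)) as formal power series in t. -/

import Mathlib

/-- The q-integer `[n]_q = 1 + q + ⋯ + q^{n-1}`. -/
def qInt {K : Type*} [CommRing K] (q : K) (n : ℕ) : K := ∑ i ∈ Finset.range n, q ^ i

/-- The y-version q-Stirling numbers of the second kind, defined by the recurrence
`S(n,k) = S(n-1,k-1) + [k]_q (1 - y q^{-k}) S(n-1,k)`. -/
def Sy {K : Type*} [Field K] (y q : K) : ℕ → ℕ → K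
  | 0, 0 => 1
  | 0, _ + 1 => 0
  | _ + 1, 0 => 0
  | n + 1, k + 1 =>
      Sy y q n k + qInt q (k + 1) * (1 - y * q ^ (-((k : ℤ) + 1))) * Sy y q n (k + 1)

lemma key_step {K : Type*} [Field K] (y q : K) (k : ℕ) :
    (PowerSeries.mk fun n => Sy y q n (k + 1)) *
      (1 - PowerSeries.C (R := K) (qInt q (k + 1) * (1 - q ^ (-((k : ℤ) + 1)) * y)) * PowerSeries.X)
    = PowerSeries.X * (PowerSeries.mk fun n => Sy y q n k) := by
  ext n
  rw [mul_sub, mul_one, ← mul_assoc, map_sub]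
  cases n with
  | zero =>
    simp [PowerSeries.coeff_zero_mul_X, Sy, PowerSeries.coeff_zero_eq_constantCoeff]
  | succ m =>
    rw [PowerSeries.coeff_succ_mul_X, PowerSeries.coeff_succ_X_mul]
    simp only [PowerSeries.coeff_mk, PowerSeries.coeff_mul_C]
    show Sy y q (m + 1) (k + 1) - Sy y q m (k + 1) * _ = Sy y q m k
    rw [Sy]
    ring

theorem stmt7 (K : Type*) [Field K] (y q : K) (hq : q ≠ 0) (k : ℕ) :
    (PowerSeries.mk fun n => Sy y q n k) *
      ∏ i ∈ Finset.Icc 1 k,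
        (1 - PowerSeries.C (R := K) (qInt q i * (1 - q ^ (-(i : ℤ)) * y)) * PowerSeries.X)
    = PowerSeries.X ^ k := by
  induction k with
  | zero =>
    simp only [Finset.Icc_self, pow_zero]
    rw [show Finset.Icc 1 0 = ∅ by decide, Finset.prod_empty, mul_one]
    ext n
    cases n <;> simp [Sy, PowerSeries.coeff_one]
  | succ k ih =>
    rw [show Finset.Icc 1 (k + 1) = insert (k + 1) (Finset.Icc 1 k) by
        ext x; simp [Nat.lt_succ_iff]; omega]
    rw [Finset.prod_insert (by simp), ← mul_assoc]
    have := key_step y q k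
    push_cast at this ⊢
    rw [this, mul_assoc, ih, pow_succ]
    ring
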